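/- For N >= 2, the sequence a_n counting compositions of n with no part divisible by N satisfies the generalized Fibonacci recurrence a_n = a_{n-1} + a_{n-2} + ... + a_{n-N} for n > N, with a_0 = 1. -/

import Mathlib

/-- `a N n` is the number of compositions of `n` with no part divisible by `N`. -/
def aComp (N n : ℕ) : ℕ :=
  ((Finset.univ : Finset (Composition n)).filter
    (fun c => ∀ p ∈ c.blocks, ¬ N ∣ p)).card

open Finset

private lemma blocks_ne_nil {n : ℕ} (hn : 1 ≤ n) (c : Composition n) : c.blocks ≠ [] := by
  intro h
  have hs := c.blocks_sum
  rw [h] at hs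
  simp at hs
  omega

/-- First-part decomposition. -/
private lemma aComp_step (N n : ℕ) (hn : 1 ≤ n) :
    aComp N n = ∑ k ∈ (Finset.Icc 1 n).filter (fun k => ¬ N ∣ k), aComp N (n - k) := by
  classical
  unfold aComp
  rw [Finset.card_eq_sum_card_fiberwise
    (f := fun c : Composition n => c.blocks.headI)
    (t := (Finset.Icc 1 n).filter (fun k => ¬ N ∣ k))
    (fun c hc => by
      simp only [Finset.mem_coe, Finset.mem_filter, Finset.mem_univ, true_and] at hc
      obtain ⟨b, t, hbt⟩ : ∃ b t, c.blocks = b :: t := by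
        rcases hl : c.blocks with _ | ⟨b, t⟩
        · exact absurd hl (blocks_ne_nil hn c)
        · exact ⟨b, t, rfl⟩
      have hsum := c.blocks_sum
      rw [hbt] at hsum
      simp only [List.sum_cons] at hsum
      have hbpos : 0 < b := c.blocks_pos (by rw [hbt]; exact List.mem_cons_self)
      have hbmem : b ∈ c.blocks := by rw [hbt]; exact List.mem_cons_self
      simp only [Finset.mem_coe, Finset.mem_filter, Finset.mem_Icc, hbt, List.headI_cons]
      exact ⟨⟨hbpos, by omega⟩, hc b hbmem⟩)]
  refine Finset.sum_congr rfl (fun k hk => ?_)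
  simp only [Finset.mem_filter, Finset.mem_Icc] at hk
  obtain ⟨⟨hk1, hkn⟩, hkdvd⟩ := hk
  refine Finset.card_bij'
    (i := fun c hc => (⟨c.blocks.tail,
      fun hi => c.blocks_pos (List.mem_of_mem_tail hi),
      by
        simp only [Finset.mem_filter] at hc
        have h2 := hc.2
        obtain ⟨b, t, hbt⟩ : ∃ b t, c.blocks = b :: t := by
          rcases hl : c.blocks with _ | ⟨b, t⟩
          · exact absurd hl (blocks_ne_nil hn c)
          · exact ⟨b, t, rfl⟩
        have hsum := c.blocks_sum
        rw [hbt] at hsum h2 ⊢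
        simp only [List.sum_cons] at hsum
        simp only [List.headI_cons] at h2
        simp only [List.tail_cons]
        omega⟩ : Composition (n - k)))
    (j := fun c hc => (⟨k :: c.blocks,
      by
        intro i hi
        rcases List.mem_cons.1 hi with hi | hi
        · omega
        · exact c.blocks_pos hi,
      by simp [c.blocks_sum]; omega⟩ : Composition n))
    ?_ ?_ ?_ ?_
  · intro c hc
    simp only [Finset.mem_filter, Finset.mem_univ, true_and] at hc ⊢
    exact fun p hp => hc.1 p (List.mem_of_mem_tail hp)
  · intro c hc
    simp only [Finset.mem_filter, Finset.mem_univ, true_and, List.headI_cons, and_true] at hc ⊢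
    intro p hp
    rcases List.mem_cons.1 hp with hp | hp
    · subst hp; exact hkdvd
    · exact hc p hp
  · intro c hc
    simp only [Finset.mem_filter] at hc
    have h2 := hc.2
    ext1
    show k :: c.blocks.tail = c.blocks
    obtain ⟨b, t, hbt⟩ : ∃ b t, c.blocks = b :: t := by
      rcases hl : c.blocks with _ | ⟨b, t⟩
      · exact absurd hl (blocks_ne_nil hn c)
      · exact ⟨b, t, rfl⟩
    rw [hbt] at h2 ⊢
    simp only [List.headI_cons] at h2
    simp [h2]
  · intro c hc
    ext1
    show (k :: c.blocks).tail = c.blocks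
    rfl
theorem aComp_recurrence (N : ℕ) (hN : 2 ≤ N) :
    aComp N 0 = 1 ∧ ∀ n : ℕ, N < n → aComp N n = ∑ k ∈ Finset.Icc 1 N, aComp N (n - k) := by
  classical
  constructor
  · unfold aComp
    have h : ∀ c : Composition 0, ∀ p ∈ c.blocks, ¬ N ∣ p := by
      intro c p hp
      have hs := c.blocks_sum
      have hpos := c.blocks_pos hp
      have hle : p ≤ c.blocks.sum := List.single_le_sum (fun x _ => Nat.zero_le x) p hp
      omega
    rw [Finset.filter_true_of_mem (fun c _ => h c), Finset.card_univ, composition_card]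
    norm_num
  · intro n hn
    have h1 : 1 ≤ n := by omega
    rw [aComp_step N n h1]
    have hsplit : Finset.Icc 1 n = Finset.Icc 1 N ∪ Finset.Icc (N + 1) n := by
      ext k
      simp only [Finset.mem_Icc, Finset.mem_union]
      omega
    rw [hsplit, Finset.filter_union, Finset.sum_union (by
      simp only [Finset.disjoint_left, Finset.mem_filter, Finset.mem_Icc]
      rintro a ⟨⟨_, h2⟩, _⟩ ⟨⟨h3, _⟩, _⟩
      omega)]
    have e1 : (Finset.Icc 1 N).filter (fun k => ¬ N ∣ k) = Finset.Icc 1 (N - 1) := by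
      ext k
      simp only [Finset.mem_filter, Finset.mem_Icc]
      constructor
      · rintro ⟨⟨hk1, hk2⟩, hk3⟩
        refine ⟨hk1, ?_⟩
        rcases eq_or_lt_of_le hk2 with rfl | hlt
        · exact absurd dvd_rfl hk3
        · omega
      · rintro ⟨hk1, hk2⟩
        refine ⟨⟨hk1, by omega⟩, fun hd => ?_⟩
        have := Nat.le_of_dvd (by omega) hd
        omega
    have e2 : ∑ k ∈ (Finset.Icc (N + 1) n).filter (fun k => ¬ N ∣ k), aComp N (n - k)
        = aComp N (n - N) := by
      rw [aComp_step N (n - N) (by omega)]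
      refine Finset.sum_bij' (fun k _ => k - N) (fun j _ => j + N) ?_ ?_ ?_ ?_ ?_
      · intro k hk
        simp only [Finset.mem_filter, Finset.mem_Icc] at hk ⊢
        obtain ⟨⟨h2, h3⟩, h4⟩ := hk
        refine ⟨⟨by omega, by omega⟩, fun hd => h4 ?_⟩
        have : k = (k - N) + N := by omega
        rw [this]
        exact Nat.dvd_add hd dvd_rfl
      · intro j hj
        simp only [Finset.mem_filter, Finset.mem_Icc] at hj ⊢
        obtain ⟨⟨h2, h3⟩, h4⟩ := hj
        refine ⟨⟨by omega, by omega⟩, fun hd => h4 ?_⟩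
        simpa using Nat.dvd_sub hd (dvd_refl N)
      · intro k hk
        simp only [Finset.mem_filter, Finset.mem_Icc] at hk
        show k - N + N = k
        omega
      · intro j _
        show j + N - N = j
        omega
      · intro k hk
        simp only [Finset.mem_filter, Finset.mem_Icc] at hk
        show aComp N (n - k) = aComp N (n - N - (k - N))
        congr 1
        omega
    rw [e1, e2]
    have : Finset.Icc 1 N = Finset.Icc 1 (N - 1 + 1) := by congr 1; omega
    rw [this, Finset.sum_Icc_succ_top (by omega)]
    have h3 : n - (N - 1 + 1) = n - N := by omega
    rw [h3]
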